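/- With the domain setup below, for every a > 0 and all x, y ∈ Ω one has min{1, 1/a} · d_Ω(x,y)² ≤ 2 · d_a(x,y)² ≤ max{1, 1/a} · d_Ω(x,y)². In particular, d_a is bi-Lipschitz equivalent to the geodesic distance d_Ω on Ω. -/

import Mathlib

open MeasureTheory Set
open scoped ENNReal

noncomputable section

abbrev Euc (d : ℕ) := EuclideanSpace ℝ (Fin d)

/-- A Lipschitz path in `S` from `x` to `y`, parametrized over `[0,1]`. -/
def IsPathIn {d : ℕ} (S : Set (Euc d)) (x y : Euc d) (X : ℝ → Euc d) : Prop :=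
  (∃ K : NNReal, LipschitzWith K X) ∧ (∀ t ∈ Icc (0:ℝ) 1, X t ∈ S) ∧ X 0 = x ∧ X 1 = y

/-- Euclidean length of a path. -/
def pathLength {d : ℕ} (X : ℝ → Euc d) : ℝ≥0∞ :=
  ∫⁻ t in Ioo (0:ℝ) 1, ENNReal.ofReal ‖deriv X t‖

/-- Kinetic energy of a path. -/
def pathEnergy {d : ℕ} (X : ℝ → Euc d) : ℝ≥0∞ :=
  ∫⁻ t in Ioo (0:ℝ) 1, ENNReal.ofReal (‖deriv X t‖ ^ 2)

/-- Geodesic distance in `S` (inf over the empty set is `⊤`). -/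
def dGeo {d : ℕ} (S : Set (Euc d)) (x y : Euc d) : ℝ≥0∞ :=
  ⨅ X : {X : ℝ → Euc d // IsPathIn S x y X}, pathLength X.1

/-- Minimal energy in `S`. -/
def eGeo {d : ℕ} (S : Set (Euc d)) (x y : Euc d) : ℝ≥0∞ :=
  ⨅ X : {X : ℝ → Euc d // IsPathIn S x y X}, pathEnergy X.1

/-- The Lagrangian `L_a`. -/
def La {d : ℕ} (Φ : Euc d → ℝ) (a : ℝ) (x v : Euc d) : ℝ≥0∞ :=
  if Φ x < 0 then ENNReal.ofReal (‖v‖ ^ 2 / 2)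
  else if Φ x = 0 ∧ inner ℝ (gradient Φ x) v = (0:ℝ) then ENNReal.ofReal (‖v‖ ^ 2 / (2 * a))
  else ⊤

/-- Action of a path for the Lagrangian `L_a`. -/
def actionA {d : ℕ} (Φ : Euc d → ℝ) (a : ℝ) (X : ℝ → Euc d) : ℝ≥0∞ :=
  ∫⁻ t in Ioo (0:ℝ) 1, La Φ a (X t) (deriv X t)

/-- The squared distance `d_a²`. -/
def daSq {d : ℕ} (Φ : Euc d → ℝ) (a : ℝ) (x y : Euc d) : ℝ≥0∞ :=
  ⨅ X : {X : ℝ → Euc d // IsPathIn {z | Φ z ≤ 0} x y X}, actionA Φ a X.1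

section AuxLemmas

variable {d : ℕ}

/-- The derivative of a Lipschitz function is bounded by the Lipschitz constant. -/
lemma my_norm_deriv_le_lip {K : NNReal} {f : ℝ → Euc d} (hf : LipschitzWith K f)
    (t : ℝ) : ‖deriv f t‖ ≤ K := by
  by_cases h : DifferentiableAt ℝ f t
  · have hd := hasDerivAt_iff_tendsto_slope.mp h.hasDerivAt
    refine le_of_tendsto hd.norm ?_
    filter_upwards [self_mem_nhdsWithin] with s hs
    have hst : s - t ≠ 0 := sub_ne_zero.mpr hs
    rw [slope_def_module, norm_smul, norm_inv, Real.norm_eq_abs]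
    have h1 : ‖f s - f t‖ ≤ (K : ℝ) * |s - t| := by
      have := hf.dist_le_mul s t
      rwa [dist_eq_norm, dist_eq_norm, Real.norm_eq_abs] at this
    calc |s - t|⁻¹ * ‖f s - f t‖ ≤ |s - t|⁻¹ * ((K : ℝ) * |s - t|) := by
          apply mul_le_mul_of_nonneg_left h1 (by positivity)
      _ = (K : ℝ) := by
          field_simp
  · simp [deriv_zero_of_not_differentiableAt h]

/-- FTC-type inequality for Lipschitz curves. -/
lemma norm_sub_le_integral_deriv {K : NNReal} {f : ℝ → Euc d} (hf : LipschitzWith K f)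
    {a b : ℝ} (hab : a ≤ b) : ‖f b - f a‖ ≤ ∫ t in a..b, ‖deriv f t‖ := by
  have hcont : Continuous f := hf.continuous
  have hfi : ∀ u v : ℝ, IntervalIntegrable f volume u v := fun u v =>
    hcont.intervalIntegrable u v
  set h : ℕ → ℝ := fun n => 1 / (n + 1) with hh
  have hpos : ∀ n, 0 < h n := fun n => by positivity
  set F : ℕ → ℝ → Euc d := fun n t => (h n)⁻¹ • (f (t + h n) - f t) with hF
  have hnormF : ∀ n t, ‖F n t‖ ≤ K := by
    intro n t
    have h1 : ‖f (t + h n) - f t‖ ≤ (K : ℝ) * (h n) := by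
      have := hf.dist_le_mul (t + h n) t
      rw [dist_eq_norm, dist_eq_norm] at this
      simpa [abs_of_pos (hpos n)] using this
    rw [hF, norm_smul, norm_inv, Real.norm_eq_abs, abs_of_pos (hpos n)]
    calc (h n)⁻¹ * ‖f (t + h n) - f t‖ ≤ (h n)⁻¹ * ((K : ℝ) * h n) := by
          apply mul_le_mul_of_nonneg_left h1 (by positivity)
      _ = (K : ℝ) := by rw [mul_comm, mul_assoc, mul_inv_cancel₀ (hpos n).ne', mul_one]
  -- Step A': averages converge to point values
  have hA' : ∀ (n : ℕ) (c : ℝ), ‖(∫ t in c..(c + h n), f t) - (h n) • f c‖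
      ≤ (K : ℝ) * (h n) ^ 2 := by
    intro n c
    have hconst : (h n) • f c = ∫ _t in c..(c + h n), f c := by
      rw [intervalIntegral.integral_const]
      simp
    rw [hconst, ← intervalIntegral.integral_sub (hfi _ _) intervalIntegrable_const]
    have hb : ∀ s ∈ Set.uIoc c (c + h n), ‖f s - f c‖ ≤ (K : ℝ) * h n := by
      intro s hs
      rw [Set.uIoc_of_le (by linarith [hpos n])] at hs
      have h1 : ‖f s - f c‖ ≤ (K : ℝ) * |s - c| := by
        have := hf.dist_le_mul s c
        rwa [dist_eq_norm, dist_eq_norm, Real.norm_eq_abs] at this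
      have h2 : |s - c| ≤ h n := by
        rw [abs_of_pos (by linarith [hs.1])]
        linarith [hs.2]
      calc ‖f s - f c‖ ≤ (K : ℝ) * |s - c| := h1
        _ ≤ (K : ℝ) * h n := by
            apply mul_le_mul_of_nonneg_left h2 (K.coe_nonneg)
    have := intervalIntegral.norm_integral_le_of_norm_le_const hb
    calc ‖∫ s in c..(c + h n), (f s - f c)‖ ≤ (K : ℝ) * h n * |c + h n - c| := this
      _ = (K : ℝ) * (h n) ^ 2 := by
          rw [show c + h n - c = h n by ring, abs_of_pos (hpos n)]; ring
  -- Step A: integrals of F n converge to f b - f a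
  have hFi : ∀ (n : ℕ) (u v : ℝ), IntervalIntegrable (F n) volume u v := by
    intro n u v
    apply Continuous.intervalIntegrable
    exact (show Continuous fun t => (h n)⁻¹ • (f (t + h n) - f t) by fun_prop)
  have hstepA : ∀ n, ‖(∫ t in a..b, F n t) - (f b - f a)‖ ≤ 2 * (K : ℝ) * h n := by
    intro n
    have e0 : (∫ t in a..b, F n t)
        = (h n)⁻¹ • ((∫ t in a..b, f (t + h n)) - ∫ t in a..b, f t) := by
      rw [hF]
      rw [intervalIntegral.integral_smul]
      congr 1
      exact intervalIntegral.integral_sub ((hcont.comp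
        (continuous_id.add continuous_const)).intervalIntegrable a b) (hfi a b)
    have e1 : (∫ t in a..b, f (t + h n)) = ∫ t in (a + h n)..(b + h n), f t :=
      intervalIntegral.integral_comp_add_right f (h n)
    have e2 : (∫ t in a..(a + h n), f t) + (∫ t in (a + h n)..(b + h n), f t)
        = ∫ t in a..(b + h n), f t :=
      intervalIntegral.integral_add_adjacent_intervals (hfi _ _) (hfi _ _)
    have e3 : (∫ t in a..b, f t) + (∫ t in b..(b + h n), f t)
        = ∫ t in a..(b + h n), f t :=
      intervalIntegral.integral_add_adjacent_intervals (hfi _ _) (hfi _ _)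
    have e4 : (∫ t in a..b, F n t)
        = (h n)⁻¹ • (((∫ t in b..(b + h n), f t) - (h n) • f b)
            - ((∫ t in a..(a + h n), f t) - (h n) • f a)) + (f b - f a) := by
      rw [e0, e1]
      have hne : h n ≠ 0 := ne_of_gt (hpos n)
      have e6 : (∫ t in (a + h n)..(b + h n), f t)
          = (∫ t in a..(b + h n), f t) - ∫ t in a..(a + h n), f t := eq_sub_of_add_eq' e2
      have e7 : (∫ t in a..b, f t)
          = (∫ t in a..(b + h n), f t) - ∫ t in b..(b + h n), f t := eq_sub_of_add_eq e3
      have e5 : (∫ t in (a + h n)..(b + h n), f t) - (∫ t in a..b, f t)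
          = ((∫ t in b..(b + h n), f t) - (h n) • f b)
            - ((∫ t in a..(a + h n), f t) - (h n) • f a)
            + ((h n) • f b - (h n) • f a) := by
        rw [e6, e7]; abel
      have e8 : (h n)⁻¹ • ((h n) • f b - (h n) • f a) = f b - f a := by
        rw [smul_sub, smul_smul, smul_smul, inv_mul_cancel₀ hne, one_smul, one_smul]
      rw [e5, smul_add, e8]
    rw [e4]
    have : ‖(h n)⁻¹ • (((∫ t in b..(b + h n), f t) - (h n) • f b)
        - ((∫ t in a..(a + h n), f t) - (h n) • f a))‖ ≤ 2 * (K : ℝ) * h n := by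
      rw [norm_smul, norm_inv, Real.norm_eq_abs, abs_of_pos (hpos n)]
      have h1 := hA' n b
      have h2 := hA' n a
      have h3 : ‖((∫ t in b..(b + h n), f t) - (h n) • f b)
          - ((∫ t in a..(a + h n), f t) - (h n) • f a)‖ ≤ 2 * ((K : ℝ) * (h n) ^ 2) := by
        calc _ ≤ ‖(∫ t in b..(b + h n), f t) - (h n) • f b‖
              + ‖(∫ t in a..(a + h n), f t) - (h n) • f a‖ := norm_sub_le _ _
          _ ≤ 2 * ((K : ℝ) * (h n) ^ 2) := by linarith
      calc (h n)⁻¹ * ‖_ - _‖ ≤ (h n)⁻¹ * (2 * ((K : ℝ) * (h n) ^ 2)) :=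
            mul_le_mul_of_nonneg_left h3 (by positivity)
        _ = 2 * (K : ℝ) * h n := by field_simp
    simpa using this
  have hh0 : Filter.Tendsto h Filter.atTop (nhds 0) := tendsto_one_div_add_atTop_nhds_zero_nat
  have hlimA : Filter.Tendsto (fun n => ∫ t in a..b, F n t) Filter.atTop (nhds (f b - f a)) := by
    rw [tendsto_iff_norm_sub_tendsto_zero]
    apply squeeze_zero (fun n => norm_nonneg _) hstepA
    simpa only [hh, mul_zero, one_div] using hh0.const_mul (2 * (K : ℝ))
  -- Step B: dominated convergence
  have hlimB : Filter.Tendsto (fun n => ∫ t in a..b, ‖F n t‖) Filter.atTop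
      (nhds (∫ t in a..b, ‖deriv f t‖)) := by
    apply intervalIntegral.tendsto_integral_filter_of_dominated_convergence
      (fun _ => (K : ℝ))
    · filter_upwards with n
      apply Continuous.aestronglyMeasurable
      exact (show Continuous fun t => ‖(h n)⁻¹ • (f (t + h n) - f t)‖ by fun_prop)
    · filter_upwards with n
      filter_upwards with t _ht
      rw [Real.norm_eq_abs, abs_of_nonneg (norm_nonneg _)]
      exact hnormF n t
    · exact intervalIntegrable_const
    · filter_upwards [hf.ae_differentiableAt_real] with t ht _
      have hd := hasDerivAt_iff_tendsto_slope.mp ht.hasDerivAt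
      have hseq : Filter.Tendsto (fun n => t + h n) Filter.atTop (nhdsWithin t {t}ᶜ) := by
        rw [tendsto_nhdsWithin_iff]
        constructor
        · simpa using (tendsto_const_nhds (x := t)).add hh0
        · filter_upwards with n
          simp only [Set.mem_compl_iff, Set.mem_singleton_iff]
          have := hpos n
          intro hcon
          nlinarith [hpos n]
      have heq : (fun n => ‖F n t‖)
          = fun n => ‖(slope f t ∘ fun n => t + h n) n‖ := by
        funext n
        simp only [Function.comp_apply, slope_def_module, add_sub_cancel_left, hF]
      exact heq ▸ (hd.comp hseq).norm
  have hle : ∀ n, ‖∫ t in a..b, F n t‖ ≤ ∫ t in a..b, ‖F n t‖ := fun n =>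
    intervalIntegral.norm_integral_le_integral_norm hab
  exact le_of_tendsto_of_tendsto' hlimA.norm hlimB hle

/-- A.e., a point where a real function vanishes and has a derivative has zero derivative. -/
lemma ae_level_deriv_zero (g : ℝ → ℝ) :
    ∀ᵐ t : ℝ, ¬ (g t = 0 ∧ ∃ c : ℝ, HasDerivAt g c t ∧ c ≠ 0) := by
  set S := {t : ℝ | g t = 0 ∧ ∃ c : ℝ, HasDerivAt g c t ∧ c ≠ 0} with hSdef
  have hiso : ∀ t ∈ S, ∃ ε > (0:ℝ), ∀ s, s ≠ t → |s - t| < ε → g s ≠ 0 := by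
    rintro t ⟨ht0, c, hc, hcne⟩
    have hslope := hasDerivAt_iff_tendsto_slope.mp hc
    have hev : ∀ᶠ s in nhdsWithin t {t}ᶜ, slope g t s ≠ 0 :=
      hslope.eventually (isOpen_compl_singleton.eventually_mem hcne)
    rw [eventually_nhdsWithin_iff, Metric.eventually_nhds_iff] at hev
    obtain ⟨ε, hε, hev⟩ := hev
    refine ⟨ε, hε, fun s hs hdist hg0 => ?_⟩
    have h1 := hev (show dist s t < ε by rwa [Real.dist_eq]) (by simpa using hs)
    apply h1
    rw [slope_def_field, hg0, ht0]
    simp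
  choose! ε hεpos hεiso using hiso
  have hq : ∀ t ∈ S, ∃ q : ℚ, t < (q:ℝ) ∧ (q:ℝ) < t + ε t := by
    intro t ht
    exact exists_rat_btwn (by linarith [hεpos t ht])
  choose! ψ hψ1 hψ2 using hq
  have hinj : Set.InjOn ψ S := by
    intro s hs t ht hst
    by_contra hne
    rcases lt_or_gt_of_ne hne with hlt | hlt
    · have h1 := hψ1 t ht
      have h2 := hψ2 s hs
      rw [hst] at h2
      have habs : |t - s| < ε s := by
        rw [abs_of_pos (by linarith)]
        linarith
      exact hεiso s hs t (ne_of_gt hlt) habs ht.1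
    · have h1 := hψ1 s hs
      have h2 := hψ2 t ht
      rw [← hst] at h2
      have habs : |s - t| < ε t := by
        rw [abs_of_pos (by linarith)]
        linarith
      exact hεiso t ht s (ne_of_gt hlt) habs hs.1
  have hcount : S.Countable :=
    Set.countable_of_injective_of_countable_image hinj (Set.to_countable _)
  have hnull : volume S = 0 := hcount.measure_zero _
  exact measure_eq_zero_iff_ae_notMem.mp hnull

end AuxLemmas

section AuxLemmas2

variable {d : ℕ}

lemma two_mul_ofReal_half (s : ℝ) (hs : 0 ≤ s) :
    (2 : ℝ≥0∞) * ENNReal.ofReal (s / 2) = ENNReal.ofReal s := by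
  rw [show (2:ℝ≥0∞) = ENNReal.ofReal 2 by simp, ← ENNReal.ofReal_mul (by norm_num)]
  congr 1
  ring

lemma two_mul_ofReal_half_a {a : ℝ} (ha : 0 < a) (s : ℝ) (hs : 0 ≤ s) :
    (2 : ℝ≥0∞) * ENNReal.ofReal (s / (2 * a))
      = ENNReal.ofReal (1 / a) * ENNReal.ofReal s := by
  rw [show (2:ℝ≥0∞) = ENNReal.ofReal 2 by simp, ← ENNReal.ofReal_mul (by norm_num),
    ← ENNReal.ofReal_mul (by positivity)]
  congr 1
  field_simp

lemma La_ge (Φ : Euc d → ℝ) {a : ℝ} (ha : 0 < a) (z v : Euc d) :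
    min 1 (ENNReal.ofReal (1 / a)) * ENNReal.ofReal (‖v‖ ^ 2) ≤ 2 * La Φ a z v := by
  unfold La
  split_ifs with h1 h2
  · rw [two_mul_ofReal_half _ (by positivity)]
    calc min 1 (ENNReal.ofReal (1 / a)) * ENNReal.ofReal (‖v‖ ^ 2)
        ≤ 1 * ENNReal.ofReal (‖v‖ ^ 2) := mul_le_mul_left (min_le_left _ _) _
      _ = ENNReal.ofReal (‖v‖ ^ 2) := one_mul _
  · rw [two_mul_ofReal_half_a ha _ (by positivity)]
    exact mul_le_mul_left (min_le_right _ _) _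
  · rw [ENNReal.mul_top (by norm_num)]
    exact le_top

lemma La_le (Φ : Euc d → ℝ) {a : ℝ} (ha : 0 < a) (z v : Euc d) (hz : Φ z ≤ 0)
    (htan : Φ z = 0 → inner ℝ (gradient Φ z) v = (0:ℝ)) :
    2 * La Φ a z v ≤ max 1 (ENNReal.ofReal (1 / a)) * ENNReal.ofReal (‖v‖ ^ 2) := by
  unfold La
  split_ifs with h1 h2
  · rw [two_mul_ofReal_half _ (by positivity)]
    calc ENNReal.ofReal (‖v‖ ^ 2) = 1 * ENNReal.ofReal (‖v‖ ^ 2) := (one_mul _).symm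
      _ ≤ max 1 (ENNReal.ofReal (1 / a)) * ENNReal.ofReal (‖v‖ ^ 2) :=
          mul_le_mul_left (le_max_left _ _) _
  · rw [two_mul_ofReal_half_a ha _ (by positivity)]
    exact mul_le_mul_left (le_max_right _ _) _
  · exfalso
    have h0 : Φ z = 0 := le_antisymm hz (not_lt.mp h1)
    exact h2 ⟨h0, htan h0⟩

/-- Cauchy–Schwarz: the squared length is at most the energy. -/
lemma sq_pathLength_le_pathEnergy (X : ℝ → Euc d) : pathLength X ^ 2 ≤ pathEnergy X := by
  have hconj : Real.HolderConjugate 2 2 := ⟨by norm_num, by norm_num, by norm_num⟩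
  have hmeas : AEMeasurable (fun t => ENNReal.ofReal ‖deriv X t‖)
      (volume.restrict (Ioo (0:ℝ) 1)) :=
    ((measurable_deriv X).norm.ennreal_ofReal).aemeasurable
  have H := ENNReal.lintegral_mul_le_Lp_mul_Lq (volume.restrict (Ioo (0:ℝ) 1)) hconj hmeas
    (aemeasurable_const (b := (1:ℝ≥0∞)))
  simp only [Pi.mul_apply, mul_one] at H
  have e2 : (∫⁻ _a in Ioo (0:ℝ) 1, (1:ℝ≥0∞) ^ (2:ℝ)) ^ ((1:ℝ)/2) = 1 := by
    simp [Real.volume_Ioo]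
  have e3 : (∫⁻ t in Ioo (0:ℝ) 1, ENNReal.ofReal ‖deriv X t‖ ^ (2:ℝ)) = pathEnergy X := by
    rw [pathEnergy]
    apply lintegral_congr
    intro t
    rw [ENNReal.ofReal_rpow_of_nonneg (norm_nonneg _) (by norm_num)]
    congr 1
    rw [show (2:ℝ) = ((2:ℕ):ℝ) by norm_num, Real.rpow_natCast]
  rw [e3, e2, mul_one] at H
  calc pathLength X ^ 2 ≤ (pathEnergy X ^ ((1:ℝ)/2)) ^ 2 := pow_le_pow_left' H 2
    _ = pathEnergy X := by
        rw [← ENNReal.rpow_natCast _ 2, ← ENNReal.rpow_mul]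
        norm_num

/-- The action is controlled by the energy, for paths staying in `Ω`. -/
lemma two_action_le (Φ : Euc d → ℝ) (hΦ : ContDiff ℝ (⊤ : ℕ∞) Φ) {a : ℝ} (ha : 0 < a)
    {X : ℝ → Euc d} (hmem : ∀ t ∈ Icc (0:ℝ) 1, Φ (X t) ≤ 0) :
    2 * actionA Φ a X ≤ max 1 (ENNReal.ofReal (1 / a)) * pathEnergy X := by
  rw [actionA, pathEnergy, ← lintegral_const_mul' _ _ (by norm_num : (2:ℝ≥0∞) ≠ ⊤),
    ← lintegral_const_mul' _ _ (by simp : max 1 (ENNReal.ofReal (1/a)) ≠ ⊤)]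
  apply lintegral_mono_ae
  have hae := ae_level_deriv_zero (fun t => Φ (X t))
  filter_upwards [ae_restrict_of_ae hae, ae_restrict_mem measurableSet_Ioo] with t ht htI
  refine La_le Φ ha _ _ (hmem t (Ioo_subset_Icc_self htI)) ?_
  intro h0
  by_cases hdiff : DifferentiableAt ℝ X t
  · by_contra hne
    apply ht
    refine ⟨h0, (inner ℝ (gradient Φ (X t)) (deriv X t) : ℝ), ?_, hne⟩
    have hg : HasGradientAt Φ (gradient Φ (X t)) (X t) :=
      ((hΦ.differentiable (by simp)) (X t)).hasGradientAt
    have hcomp := hg.hasFDerivAt.comp_hasDerivAt t hdiff.hasDerivAt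
    rw [InnerProductSpace.toDual_apply_apply] at hcomp; exact hcomp
  · rw [deriv_zero_of_not_differentiableAt hdiff, inner_zero_right]

end AuxLemmas2

section AuxLemmas3

variable {d : ℕ}

/-- Constant-speed reparametrization: every path admits a path with the same endpoints whose
energy is at most the square of the original length. -/
lemma exists_reparam {Φ : Euc d → ℝ} {x y : Euc d} {X : ℝ → Euc d}
    (hX : IsPathIn {z | Φ z ≤ 0} x y X) :
    ∃ Y : ℝ → Euc d, IsPathIn {z | Φ z ≤ 0} x y Y ∧ pathEnergy Y ≤ pathLength X ^ 2 := by
  obtain ⟨⟨K, hK⟩, hmem, hX0, hX1⟩ := hX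
  set ρ : ℝ → ℝ := fun t => ‖deriv X t‖ with hρdef
  have hρmeas : Measurable ρ := (measurable_deriv X).norm
  have hρ0 : ∀ t, 0 ≤ ρ t := fun t => norm_nonneg _
  have hρK : ∀ t, ρ t ≤ K := fun t => my_norm_deriv_le_lip hK t
  have hρint : ∀ u v : ℝ, IntervalIntegrable ρ volume u v := by
    intro u v
    rw [intervalIntegrable_iff]
    refine Integrable.mono' ((integrableOn_const_iff (C := (K:ℝ))).2 (Or.inr ?_))
      hρmeas.aestronglyMeasurable.restrict ?_
    · rw [Set.uIoc, Real.volume_Ioc]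
      exact ENNReal.ofReal_lt_top
    · filter_upwards with t
      rw [Real.norm_eq_abs, abs_of_nonneg (hρ0 t)]
      exact hρK t
  set ℓ : ℝ → ℝ := fun t => ∫ u in (0:ℝ)..t, ρ u with hℓdef
  have hℓadd : ∀ u v : ℝ, ℓ u + (∫ s in u..v, ρ s) = ℓ v := fun u v =>
    intervalIntegral.integral_add_adjacent_intervals (hρint 0 u) (hρint u v)
  have hℓmono : Monotone ℓ := by
    intro u v huv
    have h1 := intervalIntegral.integral_nonneg (μ := volume) (f := ρ) huv (fun s _ => hρ0 s)
    linarith [hℓadd u v]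
  have hkey : ∀ u v : ℝ, u ≤ v → ‖X v - X u‖ ≤ ℓ v - ℓ u := by
    intro u v huv
    have h1 := norm_sub_le_integral_deriv hK huv
    linarith [hℓadd u v]
  have hℓ0 : ℓ 0 = 0 := intervalIntegral.integral_same
  set L : ℝ := ℓ 1 with hLdef
  have hL0 : 0 ≤ L := by
    have := hℓmono zero_le_one
    linarith [hℓ0]
  have hlen : pathLength X = ENNReal.ofReal L := by
    rw [pathLength, setLIntegral_congr (Ioo_ae_eq_Ioc (a := (0:ℝ)) (b := 1)),
      ← MeasureTheory.ofReal_integral_eq_lintegral_ofReal ?_ ?_]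
    · have hL1 : L = ∫ s in Ioc (0:ℝ) 1, ρ s := by
        rw [hLdef, hℓdef]
        exact intervalIntegral.integral_of_le zero_le_one
      rw [hL1]
    · have h1 := hρint 0 1
      rw [intervalIntegrable_iff, Set.uIoc_of_le zero_le_one] at h1
      exact h1
    · filter_upwards with t using hρ0 t
  by_cases hLz : L = 0
  · -- the path has zero length: it is constant
    have hxy : x = y := by
      have h1 := hkey 0 1 zero_le_one
      rw [hX0, hX1, hℓ0, ← hLdef, hLz] at h1
      have : ‖y - x‖ ≤ 0 := by linarith
      have := norm_le_zero_iff.mp this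
      rw [sub_eq_zero] at this
      exact this.symm
    refine ⟨fun _ => x, ⟨⟨0, LipschitzWith.const x⟩, fun t _ => ?_, rfl, hxy ▸ rfl⟩, ?_⟩
    · have h1 := hmem 0 ⟨le_refl _, zero_le_one⟩
      rwa [hX0] at h1
    · have hz : ∀ t : ℝ, deriv (fun _ : ℝ => x) t = 0 := fun t => deriv_const t x
      have : pathEnergy (fun _ : ℝ => x) = 0 := by
        rw [pathEnergy]
        rw [lintegral_eq_zero_iff (by fun_prop)]
        filter_upwards with t
        simp [hz t]
      rw [this]
      exact zero_le
  · have hLpos : 0 < L := lt_of_le_of_ne hL0 (Ne.symm hLz)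
    set σ : ℝ → ℝ := fun t => ℓ t / L with hσdef
    have hℓcont : Continuous ℓ := by
      have hlip : LipschitzWith K ℓ := by
        apply LipschitzWith.of_dist_le_mul
        intro u v
        rw [Real.dist_eq, Real.dist_eq]
        have h2 : ℓ u - ℓ v = ∫ s in v..u, ρ s := by linarith [hℓadd v u]
        rw [h2]
        have h3 := intervalIntegral.norm_integral_le_of_norm_le_const
          (C := (K:ℝ)) (f := ρ) (a := v) (b := u) ?_
        · rw [Real.norm_eq_abs] at h3
          calc |∫ s in v..u, ρ s| ≤ (K:ℝ) * |u - v| := h3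
            _ = (K:ℝ) * |u - v| := rfl
        · intro s _
          rw [Real.norm_eq_abs, abs_of_nonneg (hρ0 s)]
          exact hρK s
      exact hlip.continuous
    have hσcont : Continuous σ := hℓcont.div_const L
    have hσ0 : σ 0 = 0 := by rw [hσdef]; simp [hℓ0]
    have hσ1 : σ 1 = 1 := by rw [hσdef]; simp [← hLdef, div_self hLz]
    set c : ℝ → ℝ := fun s => max 0 (min 1 s) with hcdef
    have hc_mem : ∀ s, c s ∈ Icc (0:ℝ) 1 := fun s =>
      ⟨le_max_left _ _, max_le (by norm_num) (min_le_left _ _)⟩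
    have hc_lip : ∀ s s', |c s - c s'| ≤ |s - s'| := by
      intro s s'
      have h1 : |min 1 s - min 1 s'| ≤ |s - s'| := by
        have := abs_min_sub_min_le_max (1:ℝ) s 1 s'
        simpa using this
      have h2 : |c s - c s'| ≤ |min 1 s - min 1 s'| := by
        have := abs_max_sub_max_le_max (0:ℝ) (min 1 s) 0 (min 1 s')
        simpa [hcdef] using this
      linarith
    have hc0 : c 0 = 0 := by rw [hcdef]; norm_num
    have hc1 : c 1 = 1 := by rw [hcdef]; norm_num
    have hA : ∀ s : ℝ, ∃ t, t ∈ Icc (0:ℝ) 1 ∧ σ t = c s := by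
      intro s
      have hcs : c s ∈ Icc (σ 0) (σ 1) := by
        rw [hσ0, hσ1]
        exact hc_mem s
      obtain ⟨t, ht, hts⟩ := intermediate_value_Icc zero_le_one hσcont.continuousOn hcs
      exact ⟨t, ht, hts⟩
    choose τ hτmem hτσ using hA
    have hℓτ : ∀ s, ℓ (τ s) = L * c s := by
      intro s
      have := hτσ s
      rw [hσdef] at this
      field_simp at this
      linarith
    set Y : ℝ → Euc d := fun s => X (τ s) with hYdef
    have hYlip : ∀ s s', ‖Y s - Y s'‖ ≤ L * |s - s'| := by
      have key : ∀ s s', τ s' ≤ τ s → ‖Y s - Y s'‖ ≤ L * |s - s'| := by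
        intro s s' h
        have h1 := hkey (τ s') (τ s) h
        have h2 : ℓ (τ s) - ℓ (τ s') = L * (c s - c s') := by
          rw [hℓτ s, hℓτ s']
          ring
        have h3 : c s - c s' ≤ |s - s'| := le_trans (le_abs_self _) (hc_lip s s')
        calc ‖Y s - Y s'‖ ≤ L * (c s - c s') := by rw [← h2]; exact h1
          _ ≤ L * |s - s'| := mul_le_mul_of_nonneg_left h3 hL0
      intro s s'
      rcases le_total (τ s') (τ s) with h | h
      · exact key s s' h
      · rw [norm_sub_rev, show |s - s'| = |s' - s| by rw [abs_sub_comm]]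
        exact key s' s h
    have hYlipW : LipschitzWith (Real.toNNReal L) Y := by
      apply LipschitzWith.of_dist_le_mul
      intro s s'
      rw [dist_eq_norm, Real.dist_eq, Real.coe_toNNReal _ hL0]
      exact hYlip s s'
    have hY0 : Y 0 = x := by
      have h1 : ℓ (τ 0) = 0 := by rw [hℓτ 0, hc0, mul_zero]
      have h2 := hkey 0 (τ 0) (hτmem 0).1
      rw [h1, hℓ0, sub_zero] at h2
      have h3 : X (τ 0) = X 0 := by
        rw [← sub_eq_zero]
        exact norm_le_zero_iff.mp (by linarith)
      rw [hYdef]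
      simpa [hX0] using h3
    have hY1 : Y 1 = y := by
      have h1 : ℓ (τ 1) = L := by rw [hℓτ 1, hc1, mul_one]
      have h2 := hkey (τ 1) 1 (hτmem 1).2
      rw [h1, ← hLdef, sub_self] at h2
      have h3 : X 1 = X (τ 1) := by
        rw [← sub_eq_zero]
        exact norm_le_zero_iff.mp (by linarith)
      rw [hYdef]
      simp [← h3, hX1]
    refine ⟨Y, ⟨⟨Real.toNNReal L, hYlipW⟩, fun t _ => hmem (τ t) (hτmem t), hY0, hY1⟩, ?_⟩
    have hbound : ∀ t, ENNReal.ofReal (‖deriv Y t‖ ^ 2) ≤ ENNReal.ofReal (L ^ 2) := by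
      intro t
      apply ENNReal.ofReal_le_ofReal
      have h1 : ‖deriv Y t‖ ≤ L := by
        have := my_norm_deriv_le_lip hYlipW t
        rwa [Real.coe_toNNReal _ hL0] at this
      exact pow_le_pow_left₀ (norm_nonneg _) h1 2
    calc pathEnergy Y ≤ ∫⁻ _t in Ioo (0:ℝ) 1, ENNReal.ofReal (L ^ 2) :=
          lintegral_mono (fun t => hbound t)
      _ = ENNReal.ofReal (L ^ 2) := by
          rw [setLIntegral_const, Real.volume_Ioo]
          norm_num
      _ = pathLength X ^ 2 := by
          rw [hlen, ← ENNReal.ofReal_pow hL0]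
  
end AuxLemmas3

/-- With the smooth compact domain setup, for every `a > 0` and all
`x, y ∈ Ω` one has `min {1, 1/a} · d_Ω(x,y)² ≤ 2 · d_a(x,y)² ≤ max {1, 1/a} · d_Ω(x,y)²`;
in particular `d_a` is bi-Lipschitz equivalent to the geodesic distance `d_Ω`. -/
theorem stmt5 {d : ℕ} (hd : 2 ≤ d) (Φ : Euc d → ℝ) (hΦ : ContDiff ℝ (⊤ : ℕ∞) Φ)
    (hcomp : IsCompact {z : Euc d | Φ z ≤ 0}) (hne : {z : Euc d | Φ z ≤ 0}.Nonempty)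
    (hgrad : ∀ z : Euc d, Φ z = 0 → gradient Φ z ≠ 0)
    (hconn : IsConnected {z : Euc d | Φ z < 0})
    (hclos : closure {z : Euc d | Φ z < 0} = {z : Euc d | Φ z ≤ 0})
    (a : ℝ) (ha : 0 < a) (x y : Euc d) (hx : Φ x ≤ 0) (hy : Φ y ≤ 0) :
    min 1 (ENNReal.ofReal (1 / a)) * (dGeo {z : Euc d | Φ z ≤ 0} x y) ^ 2
        ≤ 2 * daSq Φ a x y ∧
    2 * daSq Φ a x y
        ≤ max 1 (ENNReal.ofReal (1 / a)) * (dGeo {z : Euc d | Φ z ≤ 0} x y) ^ 2 := by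
  have hm1top : min 1 (ENNReal.ofReal (1 / a)) ≠ ⊤ :=
    ne_top_of_le_ne_top ENNReal.one_ne_top (min_le_left _ _)
  have hM1top : max 1 (ENNReal.ofReal (1 / a)) ≠ ⊤ := by simp
  have hM1ne : max 1 (ENNReal.ofReal (1 / a)) ≠ 0 :=
    (lt_of_lt_of_le zero_lt_one (le_max_left _ _)).ne'
  constructor
  · -- lower bound
    by_cases hone : Nonempty {X : ℝ → Euc d // IsPathIn {z : Euc d | Φ z ≤ 0} x y X}
    · have hstep : ∀ X : {X : ℝ → Euc d // IsPathIn {z : Euc d | Φ z ≤ 0} x y X},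
          min 1 (ENNReal.ofReal (1 / a)) * (dGeo {z : Euc d | Φ z ≤ 0} x y) ^ 2
            ≤ 2 * actionA Φ a X.1 := by
        intro X
        have h1 : dGeo {z : Euc d | Φ z ≤ 0} x y ≤ pathLength X.1 := iInf_le _ X
        have h4 : min 1 (ENNReal.ofReal (1 / a)) * pathEnergy X.1 ≤ 2 * actionA Φ a X.1 := by
          rw [pathEnergy, actionA, ← lintegral_const_mul' _ _ hm1top,
            ← lintegral_const_mul' _ _ (by norm_num : (2:ℝ≥0∞) ≠ ⊤)]
          exact lintegral_mono fun t => La_ge Φ ha (X.1 t) (deriv X.1 t)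
        calc min 1 (ENNReal.ofReal (1 / a)) * (dGeo {z : Euc d | Φ z ≤ 0} x y) ^ 2
            ≤ min 1 (ENNReal.ofReal (1 / a)) * pathLength X.1 ^ 2 :=
              mul_le_mul_right (pow_le_pow_left' h1 2) _
          _ ≤ min 1 (ENNReal.ofReal (1 / a)) * pathEnergy X.1 :=
              mul_le_mul_right (sq_pathLength_le_pathEnergy X.1) _
          _ ≤ 2 * actionA Φ a X.1 := h4
      have h6 : min 1 (ENNReal.ofReal (1 / a)) * (dGeo {z : Euc d | Φ z ≤ 0} x y) ^ 2 / 2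
          ≤ daSq Φ a x y := by
        rw [daSq]
        refine le_iInf fun X => ?_
        rw [ENNReal.div_le_iff (by norm_num) (by norm_num)]
        calc min 1 (ENNReal.ofReal (1 / a)) * (dGeo {z : Euc d | Φ z ≤ 0} x y) ^ 2
            ≤ 2 * actionA Φ a X.1 := hstep X
          _ = actionA Φ a X.1 * 2 := mul_comm _ _
      calc min 1 (ENNReal.ofReal (1 / a)) * (dGeo {z : Euc d | Φ z ≤ 0} x y) ^ 2
          = 2 * (min 1 (ENNReal.ofReal (1 / a)) * (dGeo {z : Euc d | Φ z ≤ 0} x y) ^ 2 / 2) :=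
            (ENNReal.mul_div_cancel' (by norm_num) (by norm_num)).symm
        _ ≤ 2 * daSq Φ a x y := mul_le_mul_right h6 _
    · haveI := not_nonempty_iff.mp hone
      rw [daSq, iInf_of_empty, ENNReal.mul_top (by norm_num)]
      exact le_top
  · -- upper bound
    by_cases hone : Nonempty {X : ℝ → Euc d // IsPathIn {z : Euc d | Φ z ≤ 0} x y X}
    · have hub : ∀ X : {X : ℝ → Euc d // IsPathIn {z : Euc d | Φ z ≤ 0} x y X},
          2 * daSq Φ a x y ≤ max 1 (ENNReal.ofReal (1 / a)) * pathLength X.1 ^ 2 := by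
        intro X
        obtain ⟨Y, hY, hYen⟩ := exists_reparam X.2
        have h1 : daSq Φ a x y ≤ actionA Φ a Y := iInf_le _ (⟨Y, hY⟩ : {X : ℝ → Euc d // IsPathIn {z : Euc d | Φ z ≤ 0} x y X})
        have h2 : 2 * actionA Φ a Y ≤ max 1 (ENNReal.ofReal (1 / a)) * pathEnergy Y :=
          two_action_le Φ hΦ ha hY.2.1
        calc 2 * daSq Φ a x y ≤ 2 * actionA Φ a Y := mul_le_mul_right h1 _
          _ ≤ max 1 (ENNReal.ofReal (1 / a)) * pathEnergy Y := h2
          _ ≤ max 1 (ENNReal.ofReal (1 / a)) * pathLength X.1 ^ 2 :=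
              mul_le_mul_right hYen _
      by_cases hDtop : dGeo {z : Euc d | Φ z ≤ 0} x y = ⊤
      · rw [hDtop, ENNReal.top_pow (by norm_num), ENNReal.mul_top hM1ne]
        exact le_top
      · haveI : (nhdsWithin (0:ℝ≥0∞) (Ioi 0)).NeBot :=
          nhdsGT_neBot_of_exists_gt ⟨1, zero_lt_one⟩
        have hcontf : Continuous (fun ε : ℝ≥0∞ =>
            max 1 (ENNReal.ofReal (1 / a)) * (dGeo {z : Euc d | Φ z ≤ 0} x y + ε) ^ 2) := by
          apply (ENNReal.continuous_const_mul hM1top).comp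
          exact (ENNReal.continuous_pow 2).comp (continuous_const.add continuous_id)
        have htend : Filter.Tendsto (fun ε : ℝ≥0∞ =>
            max 1 (ENNReal.ofReal (1 / a)) * (dGeo {z : Euc d | Φ z ≤ 0} x y + ε) ^ 2)
            (nhdsWithin 0 (Ioi 0))
            (nhds (max 1 (ENNReal.ofReal (1 / a)) * (dGeo {z : Euc d | Φ z ≤ 0} x y) ^ 2)) := by
          have h1 := (hcontf.tendsto 0).mono_left
            (nhdsWithin_le_nhds (s := Ioi (0:ℝ≥0∞)))
          simpa using h1
        apply ge_of_tendsto htend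
        filter_upwards [self_mem_nhdsWithin] with ε hε
        have hε0 : ε ≠ 0 := (mem_Ioi.mp hε).ne'
        have hlt : (⨅ X : {X : ℝ → Euc d // IsPathIn {z : Euc d | Φ z ≤ 0} x y X},
            pathLength X.1) < dGeo {z : Euc d | Φ z ≤ 0} x y + ε :=
          ENNReal.lt_add_right hDtop hε0
        obtain ⟨X, hX⟩ := iInf_lt_iff.mp hlt
        calc 2 * daSq Φ a x y ≤ max 1 (ENNReal.ofReal (1 / a)) * pathLength X.1 ^ 2 := hub X
          _ ≤ max 1 (ENNReal.ofReal (1 / a)) * (dGeo {z : Euc d | Φ z ≤ 0} x y + ε) ^ 2 :=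
              mul_le_mul_right (pow_le_pow_left' hX.le 2) _
    · haveI := not_nonempty_iff.mp hone
      rw [dGeo, iInf_of_empty, ENNReal.top_pow (by norm_num), ENNReal.mul_top hM1ne]
      exact le_top
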